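/- Dual Lipschitz continuity: Let E be a finite-dimensional real inner product space, X ⊆ E, and let h satisfy the mirror hypotheses on X with Hessian bounds 0 < μ ≤ 𝓛 (i.e., μ‖v‖² ≤ ⟨∇²h(u)v, v⟩ ≤ 𝓛‖v‖² for all u ∈ X and v ∈ E). Let f be twice continuously differentiable on an open set containing X and suppose there is L > 0 with |⟨∇²f(u)v, v⟩| ≤ L·⟨∇²h(u)v, v⟩ for all u ∈ X and v ∈ E. Then for all x, y ∈ X: ‖∇f(x) − ∇f(y)‖ ≤ L·√(𝓛/μ)·‖∇h(x) − ∇h(y)‖. -/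

import Mathlib

open RealInnerProductSpace

/-- The mirror hypotheses for a kernel `h` with gradient `h'` and Hessian `h''`
on a set `X`: `h` is twice continuously differentiable on an open set containing `X`,
the image `h' '' X` is convex, and there is a continuously differentiable local inverse
`gstar` of the mirror map `h'`, defined on an open set containing `h' '' X`, mapping the
convex hull of `h' '' X` into `X`. -/
structure MirrorHyp {E : Type*} [NormedAddCommGroup E] [InnerProductSpace ℝ E]
    [CompleteSpace E] (h : E → ℝ) (h' : E → E) (h'' : E → E →L[ℝ] E) (X : Set E) where
  U : Set E
  isOpen_U : IsOpen U
  subset_U : X ⊆ U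
  grad : ∀ x ∈ U, HasGradientAt h (h' x) x
  hess : ∀ x ∈ U, HasFDerivAt h' (h'' x) x
  hess_cont : ContinuousOn h'' U
  img_convex : Convex ℝ (h' '' X)
  gstar : E → E
  V : Set E
  isOpen_V : IsOpen V
  img_subset_V : h' '' X ⊆ V
  gstar_contDiff : ContDiffOn ℝ 1 gstar V
  gstar_rightInv : ∀ w ∈ V, h' (gstar w) = w
  gstar_leftInv : ∀ x ∈ X, gstar (h' x) = x
  gstar_maps : ∀ w ∈ convexHull ℝ (h' '' X), gstar w ∈ X

section Aux

variable {E : Type*} [NormedAddCommGroup E] [InnerProductSpace ℝ E]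

/-- Cauchy–Schwarz for a symmetric form `A` dominated by a positive form `B`. -/
lemma aux_inner_cs (A B : E →L[ℝ] E) (hAsymm : ∀ v w : E, ⟪A v, w⟫ = ⟪A w, v⟫)
    (μ L : ℝ) (hμ : 0 < μ) (hL : 0 ≤ L)
    (hBlow : ∀ v : E, μ * ‖v‖ ^ 2 ≤ ⟪B v, v⟫)
    (hrel : ∀ v : E, |⟪A v, v⟫| ≤ L * ⟪B v, v⟫)
    (v e : E) : |⟪A v, e⟫| ≤ L * Real.sqrt (⟪B v, v⟫ * ⟪B e, e⟫) := by
  have step1 : ∀ v e : E, |⟪A v, e⟫| ≤ L / 2 * (⟪B v, v⟫ + ⟪B e, e⟫) := by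
    intro v e
    have h1 := abs_le.mp (hrel (v + e))
    have h2 := abs_le.mp (hrel (v - e))
    have eA1 : ⟪A (v + e), v + e⟫ = ⟪A v, v⟫ + 2 * ⟪A v, e⟫ + ⟪A e, e⟫ := by
      simp only [map_add, inner_add_left, inner_add_right, hAsymm e v]; ring
    have eA2 : ⟪A (v - e), v - e⟫ = ⟪A v, v⟫ - 2 * ⟪A v, e⟫ + ⟪A e, e⟫ := by
      simp only [map_sub, inner_sub_left, inner_sub_right, hAsymm e v]; ring
    have hBsum : L * ⟪B (v + e), v + e⟫ + L * ⟪B (v - e), v - e⟫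
        = 4 * (L / 2 * (⟪B v, v⟫ + ⟪B e, e⟫)) := by
      have e1 : ⟪B (v + e), v + e⟫ = ⟪B v, v⟫ + ⟪B v, e⟫ + ⟪B e, v⟫ + ⟪B e, e⟫ := by
        simp only [map_add, inner_add_left, inner_add_right]; ring
      have e2 : ⟪B (v - e), v - e⟫ = ⟪B v, v⟫ - ⟪B v, e⟫ - ⟪B e, v⟫ + ⟪B e, e⟫ := by
        simp only [map_sub, inner_sub_left, inner_sub_right]; ring
      rw [e1, e2]; ring
    rw [abs_le]
    constructor <;> linarith [h1.1, h1.2, h2.1, h2.2]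
  have step2 : ∀ v e : E, ∀ s : ℝ, 0 < s →
      |⟪A v, e⟫| ≤ L / 2 * (s ^ 2 * ⟪B v, v⟫ + ⟪B e, e⟫ / s ^ 2) := by
    intro v e s hs
    have h := step1 (s • v) (s⁻¹ • e)
    simp only [map_smul, real_inner_smul_left, real_inner_smul_right] at h
    have e1 : s⁻¹ * (s * ⟪A v, e⟫) = ⟪A v, e⟫ := by field_simp
    have e2 : s * (s * ⟪B v, v⟫) = s ^ 2 * ⟪B v, v⟫ := by ring
    have hsne : s ≠ 0 := hs.ne'
    have e3 : s⁻¹ * (s⁻¹ * ⟪B e, e⟫) = ⟪B e, e⟫ / s ^ 2 := by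
      rw [eq_div_iff (by positivity : (s : ℝ) ^ 2 ≠ 0),
        show s⁻¹ * (s⁻¹ * ⟪B e, e⟫) * s ^ 2 = (s⁻¹ * s) ^ 2 * ⟪B e, e⟫ from by ring,
        inv_mul_cancel₀ hsne, one_pow, one_mul]
    rw [e1, e2, e3] at h
    exact h
  have ha0 : 0 ≤ ⟪B v, v⟫ := le_trans (by positivity) (hBlow v)
  have hb0 : 0 ≤ ⟪B e, e⟫ := le_trans (by positivity) (hBlow e)
  rcases ha0.eq_or_lt with hA | hA
  · have hv0 : v = 0 := by
      have h1 := hBlow v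
      rw [← hA] at h1
      rcases (norm_nonneg v).eq_or_lt with hn | hn
      · simpa using hn.symm
      · exact absurd h1 (not_le.mpr (mul_pos hμ (pow_pos hn 2)))
    rw [hv0]
    simp only [map_zero, inner_zero_left, abs_zero]
    positivity
  rcases hb0.eq_or_lt with hB | hB
  · have he0 : e = 0 := by
      have h1 := hBlow e
      rw [← hB] at h1
      rcases (norm_nonneg e).eq_or_lt with hn | hn
      · simpa using hn.symm
      · exact absurd h1 (not_le.mpr (mul_pos hμ (pow_pos hn 2)))
    rw [he0]
    simp only [inner_zero_right, abs_zero]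
    positivity
  · obtain ⟨p, hp, hpa⟩ : ∃ p, 0 < p ∧ ⟪B v, v⟫ = p ^ 2 :=
      ⟨Real.sqrt ⟪B v, v⟫, Real.sqrt_pos.mpr hA, (Real.sq_sqrt ha0).symm⟩
    obtain ⟨q, hq, hqb⟩ : ∃ q, 0 < q ∧ ⟪B e, e⟫ = q ^ 2 :=
      ⟨Real.sqrt ⟪B e, e⟫, Real.sqrt_pos.mpr hB, (Real.sq_sqrt hb0).symm⟩
    set s := Real.sqrt (q / p) with hsdef
    have hs : 0 < s := Real.sqrt_pos.mpr (by positivity)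
    have hs2 : s ^ 2 = q / p := Real.sq_sqrt (by positivity)
    have hpne : p ≠ 0 := hp.ne'
    have hqne : q ≠ 0 := hq.ne'
    calc |⟪A v, e⟫| ≤ L / 2 * (s ^ 2 * ⟪B v, v⟫ + ⟪B e, e⟫ / s ^ 2) := step2 v e s hs
      _ = L / 2 * (q / p * p ^ 2 + q ^ 2 / (q / p)) := by rw [hs2, hpa, hqb]
      _ = L * (p * q) := by field_simp; ring
      _ = L * Real.sqrt (⟪B v, v⟫ * ⟪B e, e⟫) := by
          rw [hpa, hqb, show p ^ 2 * q ^ 2 = (p * q) ^ 2 by ring,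
            Real.sqrt_sq (by positivity)]

/-- Norm bound for `A v` when `B v = Δ`. -/
lemma aux_norm (A B : E →L[ℝ] E) (hAsymm : ∀ v w : E, ⟪A v, w⟫ = ⟪A w, v⟫)
    (μ 𝓛 L : ℝ) (hμ : 0 < μ) (h𝓛 : 0 ≤ 𝓛) (hL : 0 ≤ L)
    (hBlow : ∀ v : E, μ * ‖v‖ ^ 2 ≤ ⟪B v, v⟫)
    (hBhigh : ∀ v : E, ⟪B v, v⟫ ≤ 𝓛 * ‖v‖ ^ 2)
    (hrel : ∀ v : E, |⟪A v, v⟫| ≤ L * ⟪B v, v⟫)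
    (v Δ : E) (hv : B v = Δ) : ‖A v‖ ≤ L * Real.sqrt (𝓛 / μ) * ‖Δ‖ := by
  have ha_le : ⟪B v, v⟫ ≤ ‖Δ‖ ^ 2 / μ := by
    have h1 : ⟪B v, v⟫ ≤ ‖Δ‖ * ‖v‖ := by rw [hv]; exact real_inner_le_norm Δ v
    have h2 : ‖v‖ ≤ ‖Δ‖ / μ := by
      rcases (norm_nonneg v).eq_or_lt with hn | hn
      · rw [← hn]; positivity
      · rw [le_div_iff₀ hμ]
        nlinarith [hBlow v]
    calc ⟪B v, v⟫ ≤ ‖Δ‖ * ‖v‖ := h1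
      _ ≤ ‖Δ‖ * (‖Δ‖ / μ) := mul_le_mul_of_nonneg_left h2 (norm_nonneg Δ)
      _ = ‖Δ‖ ^ 2 / μ := by ring
  rcases eq_or_ne (A v) 0 with h0 | h0
  · rw [h0, norm_zero]; positivity
  have hAv : 0 < ‖A v‖ := norm_pos_iff.mpr h0
  have key := aux_inner_cs A B hAsymm μ L hμ hL hBlow hrel v (A v)
  rw [real_inner_self_eq_norm_sq, abs_of_nonneg (sq_nonneg _)] at key
  have hb0 : 0 ≤ ⟪B v, v⟫ := le_trans (by positivity) (hBlow v)
  have hsq : Real.sqrt (⟪B v, v⟫ * ⟪B (A v), A v⟫)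
      ≤ Real.sqrt ((‖Δ‖ ^ 2 / μ) * (𝓛 * ‖A v‖ ^ 2)) := by
    apply Real.sqrt_le_sqrt
    have hbb : 0 ≤ ⟪B (A v), A v⟫ := le_trans (by positivity) (hBlow (A v))
    exact mul_le_mul ha_le (hBhigh (A v)) hbb (by positivity)
  have hRHS : Real.sqrt ((‖Δ‖ ^ 2 / μ) * (𝓛 * ‖A v‖ ^ 2))
      = Real.sqrt (𝓛 / μ) * (‖Δ‖ * ‖A v‖) := by
    rw [show (‖Δ‖ ^ 2 / μ) * (𝓛 * ‖A v‖ ^ 2) = (𝓛 / μ) * (‖Δ‖ * ‖A v‖) ^ 2 by ring,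
      Real.sqrt_mul (by positivity), Real.sqrt_sq (by positivity)]
  have final : ‖A v‖ ^ 2 ≤ (L * Real.sqrt (𝓛 / μ) * ‖Δ‖) * ‖A v‖ := by
    calc ‖A v‖ ^ 2 ≤ L * Real.sqrt (⟪B v, v⟫ * ⟪B (A v), A v⟫) := key
      _ ≤ L * (Real.sqrt (𝓛 / μ) * (‖Δ‖ * ‖A v‖)) := by
          rw [← hRHS]; exact mul_le_mul_of_nonneg_left hsq hL
      _ = (L * Real.sqrt (𝓛 / μ) * ‖Δ‖) * ‖A v‖ := by ring
  nlinarith [final, hAv]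

/-- Symmetry of the Hessian of a gradient field. -/
lemma grad_hess_symm [CompleteSpace E]
    {f : E → ℝ} {f' : E → E} {f'' : E → E →L[ℝ] E} {W : Set E} (hW : IsOpen W)
    (hgrad : ∀ x ∈ W, HasGradientAt f (f' x) x)
    (hhess : ∀ x ∈ W, HasFDerivAt f' (f'' x) x)
    {x : E} (hx : x ∈ W) : ∀ v w : E, ⟪f'' x v, w⟫ = ⟪f'' x w, v⟫ := by
  set T := (InnerProductSpace.toDual ℝ E)
  set Tclm : E →L[ℝ] (E →L[ℝ] ℝ) := T.toLinearIsometry.toContinuousLinearMap with hT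
  have hev : ∀ᶠ y in nhds x, HasFDerivAt f (Tclm (f' y)) y := by
    filter_upwards [hW.mem_nhds hx] with y hy
    exact hasGradientAt_iff_hasFDerivAt.mp (hgrad y hy)
  have hfd : HasFDerivAt (fun y => Tclm (f' y)) (Tclm.comp (f'' x)) x :=
    Tclm.hasFDerivAt.comp x (hhess x hx)
  intro v w
  have := second_derivative_symmetric_of_eventually hev hfd v w
  simp [Tclm, T] at this
  exact this

end Aux

/-- **Dual Lipschitz continuity.** If `f` is `L`-smooth relative to `h`
(in the Hessian sense `|⟪∇²f(u)v, v⟫| ≤ L ⟪∇²h(u)v, v⟫` on `X`) and the kernel Hessian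
satisfies `μ ‖v‖² ≤ ⟪∇²h(u)v, v⟫ ≤ 𝓛 ‖v‖²` on `X`, then the gradient of `f` is Lipschitz
with constant `L √(𝓛/μ)` with respect to the dual distance `ρ_h(x,y) = ‖∇h x - ∇h y‖`. -/
theorem dual_lipschitz_continuity
    {E : Type*} [NormedAddCommGroup E] [InnerProductSpace ℝ E] [FiniteDimensional ℝ E]
    (X : Set E) (h : E → ℝ) (h' : E → E) (h'' : E → E →L[ℝ] E)
    (mh : MirrorHyp h h' h'' X)
    (μ 𝓛 : ℝ) (hμ : 0 < μ) (hμ𝓛 : μ ≤ 𝓛)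
    (hbound : ∀ u ∈ X, ∀ v : E,
      μ * ‖v‖ ^ 2 ≤ ⟪h'' u v, v⟫ ∧ ⟪h'' u v, v⟫ ≤ 𝓛 * ‖v‖ ^ 2)
    (f : E → ℝ) (f' : E → E) (f'' : E → E →L[ℝ] E)
    (W : Set E) (hWopen : IsOpen W) (hXW : X ⊆ W)
    (hfgrad : ∀ x ∈ W, HasGradientAt f (f' x) x)
    (hfhess : ∀ x ∈ W, HasFDerivAt f' (f'' x) x)
    (hfcont : ContinuousOn f'' W)
    (L : ℝ) (hL : 0 < L)
    (hrel : ∀ u ∈ X, ∀ v : E, |⟪f'' u v, v⟫| ≤ L * ⟪h'' u v, v⟫) :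
    ∀ x ∈ X, ∀ y ∈ X,
      ‖f' x - f' y‖ ≤ L * Real.sqrt (𝓛 / μ) * ‖h' x - h' y‖ := by
  intro x hx y hy
  set Δ : E := h' x - h' y with hΔ
  set w : ℝ → E := fun t => h' y + t • Δ with hwdef
  have hw0 : w 0 = h' y := by simp [hwdef]
  have hw1 : w 1 = h' x := by simp [hwdef, hΔ]
  have hwcont : Continuous w := by
    exact continuous_const.add (continuous_id.smul continuous_const)
  have hwmem : ∀ t ∈ Set.Icc (0:ℝ) 1, w t ∈ h' '' X := by
    intro t ht
    have hmem := mh.img_convex (Set.mem_image_of_mem h' hy) (Set.mem_image_of_mem h' hx)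
      (sub_nonneg.mpr ht.2) ht.1 (by ring)
    convert hmem using 1
    simp only [hwdef, hΔ, smul_sub, sub_smul, one_smul]
    abel
  have hwV : ∀ t ∈ Set.Icc (0:ℝ) 1, w t ∈ mh.V := fun t ht => mh.img_subset_V (hwmem t ht)
  set γ : ℝ → E := fun t => mh.gstar (w t) with hγdef
  have hγX : ∀ t ∈ Set.Icc (0:ℝ) 1, γ t ∈ X := fun t ht =>
    mh.gstar_maps _ (subset_convexHull ℝ _ (hwmem t ht))
  have hγ0 : γ 0 = y := by rw [hγdef]; simp only [hw0]; exact mh.gstar_leftInv y hy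
  have hγ1 : γ 1 = x := by rw [hγdef]; simp only [hw1]; exact mh.gstar_leftInv x hx
  have hwderiv : ∀ t : ℝ, HasDerivAt w Δ t := by
    intro t
    rw [hwdef]
    simpa using ((hasDerivAt_id t).smul_const Δ).const_add (h' y)
  have hγderiv : ∀ t ∈ Set.Icc (0:ℝ) 1, HasDerivAt γ (fderiv ℝ mh.gstar (w t) Δ) t := by
    intro t ht
    have hdiff : DifferentiableAt ℝ mh.gstar (w t) :=
      (mh.gstar_contDiff.contDiffAt (mh.isOpen_V.mem_nhds (hwV t ht))).differentiableAt one_ne_zero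
    exact hdiff.hasFDerivAt.comp_hasDerivAt t (hwderiv t)
  have hhchain : ∀ t ∈ Set.Icc (0:ℝ) 1, h'' (γ t) (fderiv ℝ mh.gstar (w t) Δ) = Δ := by
    intro t ht
    have h1 : HasDerivAt (fun s => h' (γ s)) (h'' (γ t) (fderiv ℝ mh.gstar (w t) Δ)) t :=
      (mh.hess _ (mh.subset_U (hγX t ht))).comp_hasDerivAt t (hγderiv t ht)
    have h2 : HasDerivAt (fun s => h' (γ s)) Δ t := by
      apply (hwderiv t).congr_of_eventuallyEq
      have hmem : w ⁻¹' mh.V ∈ nhds t :=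
        (mh.isOpen_V.preimage hwcont).mem_nhds (hwV t ht)
      filter_upwards [hmem] with s hs
      exact mh.gstar_rightInv _ hs
    exact h1.unique h2
  set φ : ℝ → E := fun t => f'' (γ t) (fderiv ℝ mh.gstar (w t) Δ) with hφdef
  have hfchain : ∀ t ∈ Set.Icc (0:ℝ) 1, HasDerivAt (fun s => f' (γ s)) (φ t) t :=
    fun t ht => (hfhess _ (hXW (hγX t ht))).comp_hasDerivAt t (hγderiv t ht)
  have hγcont : ContinuousOn γ (Set.Icc (0:ℝ) 1) :=
    mh.gstar_contDiff.continuousOn.comp hwcont.continuousOn (fun t ht => hwV t ht)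
  have hGcont : ContinuousOn (fun t => fderiv ℝ mh.gstar (w t)) (Set.Icc (0:ℝ) 1) :=
    (mh.gstar_contDiff.continuousOn_fderiv_of_isOpen mh.isOpen_V le_rfl).comp
      hwcont.continuousOn (fun t ht => hwV t ht)
  have hφcont : ContinuousOn φ (Set.Icc (0:ℝ) 1) :=
    (hfcont.comp hγcont (fun t ht => hXW (hγX t ht))).clm_apply
      (hGcont.clm_apply continuousOn_const)
  have hIcc : Set.uIcc (0:ℝ) 1 = Set.Icc 0 1 := Set.uIcc_of_le zero_le_one
  have hFTC : ∫ t in (0:ℝ)..1, φ t = f' x - f' y := by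
    rw [intervalIntegral.integral_eq_sub_of_hasDerivAt
      (fun t ht => hfchain t (hIcc ▸ ht))
      ((hIcc ▸ hφcont : ContinuousOn φ (Set.uIcc (0:ℝ) 1)).intervalIntegrable)]
    rw [hγ0, hγ1]
  have hbnd : ∀ t ∈ Set.Ioc (0:ℝ) 1, ‖φ t‖ ≤ L * Real.sqrt (𝓛 / μ) * ‖Δ‖ := by
    intro t ht
    have ht' : t ∈ Set.Icc (0:ℝ) 1 := Set.Ioc_subset_Icc_self ht
    have hu : γ t ∈ X := hγX t ht'
    have hsym : ∀ v u : E, ⟪f'' (γ t) v, u⟫ = ⟪f'' (γ t) u, v⟫ :=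
      grad_hess_symm hWopen hfgrad hfhess (hXW hu)
    exact aux_norm (f'' (γ t)) (h'' (γ t)) hsym μ 𝓛 L hμ (le_trans hμ.le hμ𝓛) hL.le
      (fun v => (hbound _ hu v).1) (fun v => (hbound _ hu v).2) (hrel _ hu)
      _ Δ (hhchain t ht')
  calc ‖f' x - f' y‖ = ‖∫ t in (0:ℝ)..1, φ t‖ := by rw [hFTC]
    _ ≤ (L * Real.sqrt (𝓛 / μ) * ‖Δ‖) * |1 - 0| := by
        apply intervalIntegral.norm_integral_le_of_norm_le_const
        intro t ht
        exact hbnd t (by simpa [Set.uIoc_of_le (zero_le_one' ℝ)] using ht)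
    _ = L * Real.sqrt (𝓛 / μ) * ‖h' x - h' y‖ := by
        rw [hΔ]; simp
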